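/- arXiv:2203.11356 — 3 statements merged into one kernel-verified Lean document; each statement's English description precedes it below -/
import Mathlib

section
/- Let X be an affine variety over an algebraically closed field K of characteristic zero, and let L be a subspace of the Lie algebra VF(X) of algebraic vector fields (derivations of O(X)). If L is locally finite as a set of linear endomorphisms of O(X) (i.e., every f in O(X) lies in a finite-dimensional subspace invariant under all elements of L), then L is finite dimensional. -/
/-- If `L` is a subspace of the derivations of the coordinate ring of an
affine variety (a finitely generated integral domain over an algebraically closed field
of characteristic zero) which is locally finite, then `L` is finite dimensional. -/
theorem locallyFinite_subspace_of_derivations_finiteDimensional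
    (K : Type*) [Field K] [IsAlgClosed K] [CharZero K]
    (A : Type*) [CommRing A] [IsDomain A] [Algebra K A] [Algebra.FiniteType K A]
    (L : Submodule K (Derivation K A A))
    (hL : ∀ f : A, ∃ W : Submodule K A, FiniteDimensional K W ∧ f ∈ W ∧
      ∀ δ ∈ L, ∀ w ∈ W, δ w ∈ W) :
    FiniteDimensional K L := by
  obtain ⟨s, hs⟩ := Algebra.FiniteType.out (A := A) (R := K)
  choose W hWfd hWmem hWinv using hL
  haveI : ∀ x : s, FiniteDimensional K (W (x : A)) := fun x => hWfd x
  let Φ : L →ₗ[K] (∀ x : s, W (x : A)) :=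
    { toFun := fun δ => fun x => ⟨(δ : Derivation K A A) (x : A),
        hWinv (x : A) δ δ.2 (x : A) (hWmem (x : A))⟩
      map_add' := by intro δ₁ δ₂; funext x; rfl
      map_smul' := by intro c δ; funext x; rfl }
  have hΦ : Function.Injective Φ := by
    intro δ₁ δ₂ h
    ext1
    apply Derivation.ext
    intro a
    have ha : a ∈ Algebra.adjoin K (s : Set A) := hs ▸ Algebra.mem_top
    have heq : Set.EqOn (δ₁ : Derivation K A A) (δ₂ : Derivation K A A) (s : Set A) := by
      intro x hx
      have := congrFun h ⟨x, hx⟩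
      exact congrArg Subtype.val this
    exact Derivation.eqOn_adjoin heq ha
  exact FiniteDimensional.of_injective Φ hΦ
end

section
/- Let δ be a locally finite endomorphism of a K-vector space A with Jordan decomposition δ = δ_s + δ_n (δ_s semisimple, δ_n locally nilpotent, commuting). If A is a commutative K-algebra and δ is a derivation, and A is generated by a finite-dimensional δ-invariant subspace V, then δ_s and δ_n are again derivations of A. -/
open Module TensorProduct

/-- If `a` and `b` are generalized eigenvectors of a derivation `δ` for eigenvalues
`l` and `m`, then `a * b` is a generalized eigenvector for `l + m`. -/
lemma aux_mul_mem_maxGenEigenspace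
    {K : Type*} [Field K] {A : Type*} [CommRing A] [Algebra K A]
    (δ : Derivation K A A) {l m : K} {a b : A}
    (ha : a ∈ Module.End.maxGenEigenspace (δ.toLinearMap : Module.End K A) l)
    (hb : b ∈ Module.End.maxGenEigenspace (δ.toLinearMap : Module.End K A) m) :
    a * b ∈ Module.End.maxGenEigenspace (δ.toLinearMap : Module.End K A) (l + m) := by
  rw [Module.End.mem_maxGenEigenspace] at ha hb ⊢
  obtain ⟨k₁, hk₁⟩ := ha
  obtain ⟨k₂, hk₂⟩ := hb
  set Dl : Module.End K A := δ.toLinearMap - l • 1 with hDl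
  set Dm : Module.End K A := δ.toLinearMap - m • 1 with hDm
  set Ds : Module.End K A := δ.toLinearMap - (l + m) • 1 with hDs
  set f₁ : Module.End K (A ⊗[K] A) := Dl.rTensor A with hf₁
  set f₂ : Module.End K (A ⊗[K] A) := Dm.lTensor A with hf₂
  have hcsq : Ds ∘ₗ LinearMap.mul' K A = (LinearMap.mul' K A) ∘ₗ (f₁ + f₂) := by
    apply TensorProduct.ext'
    intro x y
    simp only [LinearMap.coe_comp, Function.comp_apply, LinearMap.mul'_apply,
      LinearMap.add_apply, hf₁, hf₂, LinearMap.rTensor_tmul, LinearMap.lTensor_tmul,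
      hDl, hDm, hDs, LinearMap.sub_apply, LinearMap.smul_apply, Module.End.one_apply,
      map_add, Derivation.coeFn_coe]
    rw [δ.leibniz]
    simp only [smul_eq_mul, sub_mul, mul_sub, smul_mul_assoc, mul_smul_comm, add_smul]
    rw [mul_comm y (δ x)]
    abel
  have hcomm : Commute f₁ f₂ := by
    apply TensorProduct.ext'
    intro x y
    simp [hf₁, hf₂, Module.End.mul_apply]
  refine ⟨k₁ + k₂, ?_⟩
  have key : (Ds ^ (k₁ + k₂)) (a * b) =
      (LinearMap.mul' K A) (((f₁ + f₂) ^ (k₁ + k₂)) (a ⊗ₜ[K] b)) := by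
    have h := Module.End.commute_pow_left_of_commute hcsq (k₁ + k₂)
    have : ((Ds ^ (k₁ + k₂)) ∘ₗ LinearMap.mul' K A) (a ⊗ₜ[K] b)
        = ((LinearMap.mul' K A) ∘ₗ ((f₁ + f₂) ^ (k₁ + k₂))) (a ⊗ₜ[K] b) := by rw [h]
    simpa [LinearMap.mul'_apply] using this
  rw [key, hcomm.add_pow']
  simp only [LinearMap.coe_sum, Finset.sum_apply, map_sum]
  apply Finset.sum_eq_zero
  rintro ⟨i, j⟩ hij
  rw [Finset.HasAntidiagonal.mem_antidiagonal] at hij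
  suffices h0 : ((f₁ ^ i * f₂ ^ j) (a ⊗ₜ[K] b)) = 0 by
    simp [LinearMap.smul_apply, h0]
  have hf2j : (f₂ ^ j) (a ⊗ₜ[K] b) = a ⊗ₜ[K] ((Dm ^ j) b) := by
    rw [hf₂, LinearMap.lTensor_pow, LinearMap.lTensor_tmul]
  have hf1i : ∀ y : A, (f₁ ^ i) (a ⊗ₜ[K] y) = ((Dl ^ i) a) ⊗ₜ[K] y := by
    intro y
    rw [hf₁, LinearMap.rTensor_pow, LinearMap.rTensor_tmul]
  rcases le_or_gt k₁ i with hi | hi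
  · rw [Module.End.mul_apply, hf2j, hf1i, Module.End.pow_map_zero_of_le hi hk₁, zero_tmul]
  · have hj : k₂ ≤ j := by omega
    rw [Module.End.mul_apply, hf2j, Module.End.pow_map_zero_of_le hj hk₂, tmul_zero, map_zero]

/-- If `δ` is a locally finite derivation of a commutative algebra generated
by a finite-dimensional `δ`-invariant subspace, with Jordan decomposition
`δ = δs + δn` (`δs` semisimple, `δn` locally nilpotent, commuting), then `δs` and `δn`
are again derivations. -/
theorem jordan_parts_of_derivation_are_derivations
    (K : Type*) [Field K] [IsAlgClosed K] [CharZero K]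
    (A : Type*) [CommRing A] [Algebra K A]
    (V : Submodule K A) (hVfin : FiniteDimensional K V)
    (hVgen : Algebra.adjoin K (V : Set A) = ⊤)
    (δ : Derivation K A A) (hδV : ∀ v ∈ V, δ v ∈ V)
    (δs δn : Module.End K A)
    (hsum : (δ.toLinearMap : Module.End K A) = δs + δn)
    (hcomm : Commute δs δn)
    (hs : (⨆ a : K, Module.End.eigenspace δs a) = ⊤)
    (hn : ∀ a : A, ∃ m : ℕ, (δn ^ m) a = 0) :
    (∀ a b : A, δs (a * b) = a * δs b + δs a * b) ∧
    (∀ a b : A, δn (a * b) = a * δn b + δn a * b) := by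
  classical
  set E : K → Submodule K A := Module.End.eigenspace δs with hE
  set G : K → Submodule K A :=
    Module.End.maxGenEigenspace (δ.toLinearMap : Module.End K A) with hG
  -- Step 1: each eigenspace of δs is contained in the generalized eigenspace of δ.
  have hEG : ∀ l : K, E l ≤ G l := by
    intro l x hx
    rw [hE, Module.End.mem_eigenspace_iff] at hx
    have step : ∀ y : A, δs y = l • y →
        ((δ.toLinearMap : Module.End K A) - l • 1) y = δn y ∧ δs (δn y) = l • δn y := by
      intro y hy
      constructor
      · simp [hsum, hy, LinearMap.sub_apply, LinearMap.add_apply]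
      · have : δs (δn y) = δn (δs y) := by
          have := hcomm.eq
          calc δs (δn y) = (δs * δn) y := rfl
            _ = (δn * δs) y := by rw [this]
            _ = δn (δs y) := rfl
        rw [this, hy, map_smul]
    have main : ∀ k : ℕ,
        (((δ.toLinearMap : Module.End K A) - l • 1) ^ k) x = (δn ^ k) x ∧
        δs ((δn ^ k) x) = l • ((δn ^ k) x) := by
      intro k
      induction k with
      | zero => simpa using hx
      | succ k ih =>
        obtain ⟨ih1, ih2⟩ := ih
        obtain ⟨s1, s2⟩ := step _ ih2
        constructor
        · rw [pow_succ', Module.End.mul_apply, ih1, s1, ← Module.End.mul_apply, ← pow_succ']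
        · rw [pow_succ', Module.End.mul_apply]
          exact s2
    obtain ⟨k, hk⟩ := hn x
    rw [hG, Module.End.mem_maxGenEigenspace]
    exact ⟨k, by rw [(main k).1, hk]⟩
  -- Step 2 + 3: products of eigenvectors are eigenvectors for the sum of eigenvalues.
  have key : ∀ (l m : K) (a b : A), a ∈ E l → b ∈ E m →
      δs (a * b) = (l + m) • (a * b) := by
    intro l m a b ha hb
    have hab : a * b ∈ G (l + m) :=
      aux_mul_mem_maxGenEigenspace δ (hEG l ha) (hEG m hb)
    have htop : a * b ∈ ⨆ ν : K, E ν := by rw [hE, hs]; trivial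
    obtain ⟨c, hc, hcsum⟩ := (Submodule.mem_iSup_iff_exists_finsupp E (a * b)).mp htop
    have hind := Module.End.independent_maxGenEigenspace
      (δ.toLinearMap : Module.End K A)
    have hdis : Disjoint (G (l + m)) (⨆ (j : K) (_ : j ≠ l + m), G j) := hind (l + m)
    have hy1 : a * b - c (l + m) ∈ G (l + m) :=
      sub_mem hab (hEG _ (hc _))
    have hy2 : a * b - c (l + m) ∈ ⨆ (j : K) (_ : j ≠ l + m), G j := by
      have hrepr : a * b - c (l + m) = ∑ ν ∈ c.support.erase (l + m), c ν := by
        rw [← hcsum, Finsupp.sum]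
        by_cases hmem : (l + m) ∈ c.support
        · rw [Finset.sum_erase_eq_sub hmem]
        · rw [Finset.erase_eq_of_notMem hmem,
            Finsupp.notMem_support_iff.mp hmem, sub_zero]
      rw [hrepr]
      apply Submodule.sum_mem
      intro ν hν
      have hνne : ν ≠ l + m := Finset.ne_of_mem_erase hν
      exact Submodule.mem_iSup_of_mem ν (Submodule.mem_iSup_of_mem hνne (hEG ν (hc ν)))
    have hy0 : a * b - c (l + m) = 0 :=
      (Submodule.disjoint_def.mp hdis) _ hy1 hy2
    have hABmem : a * b ∈ E (l + m) := by
      rw [sub_eq_zero] at hy0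
      rw [hy0]; exact hc _
    rw [hE, Module.End.mem_eigenspace_iff] at hABmem
    exact hABmem
  -- Step 4: extend by linearity.
  have hb_step : ∀ (l : K) (a : A), a ∈ E l → ∀ b : A,
      δs (a * b) = a * δs b + l • a * b := by
    intro l a ha b
    have hbtop : b ∈ ⨆ ν : K, E ν := by rw [hE, hs]; trivial
    refine Submodule.iSup_induction (motive := fun z => δs (a * z) = a * δs z + l • a * z)
      E hbtop (fun m x hx => ?_) (by simp) ?_
    · show δs (a * x) = a * δs x + l • a * x
      rw [key l m a x ha hx]
      have hx' : δs x = m • x := by rwa [hE, Module.End.mem_eigenspace_iff] at hx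
      rw [hx', add_smul, mul_smul_comm, smul_mul_assoc]
      abel
    · intro x y hxeq hyeq
      rw [mul_add, map_add, hxeq, hyeq, map_add, mul_add, mul_add]
      ring
  have hsder : ∀ a b : A, δs (a * b) = a * δs b + δs a * b := by
    intro a b
    have hatop : a ∈ ⨆ ν : K, E ν := by rw [hE, hs]; trivial
    refine Submodule.iSup_induction (motive := fun z => δs (z * b) = z * δs b + δs z * b)
      E hatop (fun l x hx => ?_) (by simp) ?_
    · show δs (x * b) = x * δs b + δs x * b
      rw [hb_step l x hx b]
      have hx' : δs x = l • x := by rwa [hE, Module.End.mem_eigenspace_iff] at hx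
      rw [hx', smul_mul_assoc]
    · intro x y hxeq hyeq
      rw [add_mul, map_add, hxeq, hyeq, map_add, add_mul]
      ring
  refine ⟨hsder, fun a b => ?_⟩
  have hδn : ∀ x : A, δn x = δ x - δs x := by
    intro x
    have : δ x = δs x + δn x := by
      rw [show (δ x : A) = (δ.toLinearMap : Module.End K A) x from rfl, hsum]; rfl
    rw [this]; ring
  rw [hδn, hδn, hδn, δ.leibniz, hsder]
  simp only [smul_eq_mul]
  ring
end

section
/- Consider the polynomial automorphism φ = u∘v of the affine plane over K, where u = (x + y², y) and v = (x, y + x²), so φ(x,y) = (x + y² + 2x²y + y⁴, y + x²). Writing φ^k = (f_k, h_k), all coefficients of f_k and h_k are non-negative integers, and for every k ≥ 1 the polynomial f_k contains the monomial y^{3k−1} with a nonzero (positive) coefficient. -/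
open MvPolynomial

noncomputable def phiIter : ℕ → MvPolynomial (Fin 2) ℚ × MvPolynomial (Fin 2) ℚ
  | 0 => (X 0, X 1)
  | k + 1 =>
      let f := (phiIter k).1
      let h := (phiIter k).2
      (f + h ^ 2 + 2 * f ^ 2 * h + h ^ 4, h + f ^ 2)

noncomputable def natIter : ℕ → MvPolynomial (Fin 2) ℕ × MvPolynomial (Fin 2) ℕ
  | 0 => (X 0, X 1)
  | k + 1 =>
      let f := (natIter k).1
      let h := (natIter k).2
      (f + h ^ 2 + 2 * f ^ 2 * h + h ^ 4, h + f ^ 2)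

lemma phiIter_eq (k : ℕ) :
    phiIter k = (map (Nat.castRingHom ℚ) (natIter k).1,
                 map (Nat.castRingHom ℚ) (natIter k).2) := by
  induction k with
  | zero => simp [phiIter, natIter]
  | succ k ih =>
      simp only [phiIter, natIter, ih]
      simp [map_add, map_mul, map_pow, map_ofNat]

lemma coeff_mul_ge (p q : MvPolynomial (Fin 2) ℕ) (a b : Fin 2 →₀ ℕ) :
    coeff a p * coeff b q ≤ coeff (a + b) (p * q) := by
  rw [coeff_mul]
  have hm : (a, b) ∈ Finset.HasAntidiagonal.antidiagonal (a + b) := Finset.HasAntidiagonal.mem_antidiagonal.mpr rfl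
  exact Finset.single_le_sum (f := fun x => coeff x.1 p * coeff x.2 q) (fun i _ => Nat.zero_le _) hm

lemma key (k : ℕ) :
    0 < coeff (Finsupp.single 1 1) (natIter k).2 ∧
    (1 ≤ k → 0 < coeff (Finsupp.single 1 2) (natIter k).1 ∧
      0 < coeff (Finsupp.single 1 (3 * k - 1)) (natIter k).1) := by
  induction k with
  | zero =>
      refine ⟨?_, by omega⟩
      simp [natIter, coeff_X]
  | succ k ih =>
      obtain ⟨hy, hf⟩ := ih
      set f := (natIter k).1
      set h := (natIter k).2
      have hsq : 0 < coeff (Finsupp.single 1 2) (h ^ 2) := by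
        have : Finsupp.single (1 : Fin 2) 2
            = Finsupp.single 1 1 + Finsupp.single 1 1 := by
          rw [← Finsupp.single_add]
        rw [this, sq]
        calc 0 < coeff (Finsupp.single 1 1) h * coeff (Finsupp.single 1 1) h :=
              Nat.mul_pos hy hy
          _ ≤ _ := coeff_mul_ge h h _ _
      have hy2 : 0 < coeff (Finsupp.single 1 2) (natIter (k+1)).1 := by
        show 0 < coeff _ (f + h ^ 2 + 2 * f ^ 2 * h + h ^ 4)
        simp only [coeff_add]
        omega
      refine ⟨?_, fun _ => ⟨hy2, ?_⟩⟩
      · show 0 < coeff _ (h + f ^ 2)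
        simp only [coeff_add]; omega
      · rcases Nat.eq_zero_or_pos k with hk | hk
        · subst hk; simpa using hy2
        · obtain ⟨h2, h3⟩ := hf hk
          have hdec : Finsupp.single (1 : Fin 2) (3 * (k+1) - 1)
              = (Finsupp.single 1 2 + Finsupp.single 1 (3 * k - 1))
                + Finsupp.single 1 1 := by
            rw [← Finsupp.single_add, ← Finsupp.single_add]
            congr 1
            omega
          have hterm : 0 < coeff (Finsupp.single 1 (3 * (k+1) - 1)) (2 * f ^ 2 * h) := by
            have h1 : coeff (Finsupp.single 1 2 + Finsupp.single 1 (3 * k - 1)) (f ^ 2)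
                ≥ coeff (Finsupp.single 1 2) f * coeff (Finsupp.single 1 (3 * k - 1)) f := by
              rw [sq]; exact coeff_mul_ge f f _ _
            have h4 : coeff (Finsupp.single 1 (3 * (k+1) - 1)) (f ^ 2 * h)
                ≥ coeff (Finsupp.single 1 2 + Finsupp.single 1 (3 * k - 1)) (f ^ 2)
                  * coeff (Finsupp.single 1 1) h := by
              rw [hdec]; exact coeff_mul_ge _ _ _ _
            have h5 : (2 : MvPolynomial (Fin 2) ℕ) * f ^ 2 * h = f ^ 2 * h + f ^ 2 * h := by
              ring
            rw [h5, coeff_add]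
            have := Nat.mul_pos (Nat.mul_pos h2 h3) hy
            calc 0 < coeff (Finsupp.single 1 2) f * coeff (Finsupp.single 1 (3 * k - 1)) f
                  * coeff (Finsupp.single 1 1) h := this
              _ ≤ coeff (Finsupp.single 1 (3 * (k+1) - 1)) (f ^ 2 * h) :=
                  le_trans (Nat.mul_le_mul_right _ h1) h4
              _ ≤ _ := Nat.le_add_right _ _
          show 0 < coeff _ (f + h ^ 2 + 2 * f ^ 2 * h + h ^ 4)
          simp only [coeff_add]
          omega

/-- All coefficients of `f_k` and `h_k` are non-negative integers, and for
`k ≥ 1` the polynomial `f_k` contains the monomial `y^(3k-1)` with positive coefficient. -/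
theorem phiIter_coeffs_nonneg_and_contains_y_pow
    (k : ℕ) :
    (∀ m : Fin 2 →₀ ℕ, ∃ n : ℕ, coeff m (phiIter k).1 = (n : ℚ)) ∧
    (∀ m : Fin 2 →₀ ℕ, ∃ n : ℕ, coeff m (phiIter k).2 = (n : ℚ)) ∧
    (1 ≤ k → 0 < coeff (Finsupp.single 1 (3 * k - 1)) (phiIter k).1) := by
  rw [phiIter_eq]
  refine ⟨fun m => ⟨coeff m (natIter k).1, by simp [coeff_map]⟩,
    fun m => ⟨coeff m (natIter k).2, by simp [coeff_map]⟩, fun hk => ?_⟩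
  have := ((key k).2 hk).2
  simp only [coeff_map]
  exact Nat.cast_pos.mpr this
end
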